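/- Let n = 2, let d_1, d_2 be unit vectors in ℂ^m, and let ρ_A be a density matrix on ℂ² with q_i = (ρ_A)_{ii}. Then equality holds: (P_s(q) − 1/2)² + V(ρ̃_A)² = 1/4 − (1/2)·(Tr(ρ̃_D²) − Tr(ρ̃_A²)). -/

import Mathlib

open Matrix ComplexOrder

noncomputable section

/-- Inner product ⟨a, b⟩ = ∑ i, conj (a i) * b i on a finite-dimensional complex space. -/
def ip {k : Type*} [Fintype k] (a b : k → ℂ) : ℂ := ∑ i, star (a i) * b i

/-- The optimal success probability of minimum-error discrimination of the detector
states `d i` with prior probabilities `q i`: the supremum over all POVMs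
`Pov` (positive semidefinite matrices summing to the identity) of
`∑ i, q i * ⟨d i, Pov i (d i)⟩`. -/
def Ps {m n : ℕ} (d : Fin n → Fin m → ℂ) (q : Fin n → ℝ) : ℝ :=
  sSup { x : ℝ | ∃ Pov : Fin n → Matrix (Fin m) (Fin m) ℂ,
    (∀ i, (Pov i).PosSemidef) ∧ (∑ i, Pov i) = 1 ∧
    x = ∑ i, q i * (ip (d i) ((Pov i) *ᵥ (d i))).re }

/-- The visibility `V(ρ̃_A) = √( (2(n−1)/n²) ∑_{i≠k} |⟨d_k, d_i⟩|² |(ρ_A)_{ik}|² )`. -/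
def Vis {m n : ℕ} (d : Fin n → Fin m → ℂ) (ρ : Matrix (Fin n) (Fin n) ℂ) : ℝ :=
  Real.sqrt ((2 * ((n : ℝ) - 1) / (n : ℝ) ^ 2) *
    ∑ i, ∑ k, if i = k then 0 else ‖ip (d k) (d i)‖ ^ 2 * ‖ρ i k‖ ^ 2)

/-- The post-interaction detector state `ρ̃_D = ∑ i, q i • d i (d i)^*`. -/
def detState {m n : ℕ} (d : Fin n → Fin m → ℂ) (q : Fin n → ℝ) :
    Matrix (Fin m) (Fin m) ℂ :=
  ∑ i, (q i : ℂ) • vecMulVec (d i) (star (d i))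

/-- The post-interaction particle state `(ρ̃_A)_{ik} = ⟨d_k, d_i⟩ (ρ_A)_{ik}`. -/
def post {m n : ℕ} (d : Fin n → Fin m → ℂ) (ρ : Matrix (Fin n) (Fin n) ℂ) :
    Matrix (Fin n) (Fin n) ℂ :=
  Matrix.of fun i k => ip (d k) (d i) * ρ i k

/-- The purity `Tr(ρ²)` (as a real number). -/
def purity {k : Type*} [Fintype k] (ρ : Matrix k k ℂ) : ℝ := ((ρ * ρ).trace).re


section IpLemmas
variable {k : Type*} [Fintype k]

lemma ip_conj (a b : k → ℂ) : ip b a = star (ip a b) := by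
  simp [ip, star_sum, mul_comm]

lemma ip_smul_right (a b : k → ℂ) (c : ℂ) : ip a (c • b) = c * ip a b := by
  simp only [ip, Finset.mul_sum, Pi.smul_apply, smul_eq_mul]
  exact Finset.sum_congr rfl fun i _ => by ring

lemma ip_smul_left (a b : k → ℂ) (c : ℂ) : ip (c • a) b = star c * ip a b := by
  simp only [ip, Finset.mul_sum, Pi.smul_apply, smul_eq_mul, star_mul']
  exact Finset.sum_congr rfl fun i _ => by ring

lemma ip_add_right (a b b' : k → ℂ) : ip a (b + b') = ip a b + ip a b' := by
  simp [ip, mul_add, Finset.sum_add_distrib]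

lemma ip_add_left (a a' b : k → ℂ) : ip (a + a') b = ip a b + ip a' b := by
  simp [ip, add_mul, Finset.sum_add_distrib]

lemma ip_sub_right (a b b' : k → ℂ) : ip a (b - b') = ip a b - ip a b' := by
  simp [ip, mul_sub, Finset.sum_sub_distrib]

lemma ip_sub_left (a a' b : k → ℂ) : ip (a - a') b = ip a b - ip a' b := by
  simp [ip, sub_mul, Finset.sum_sub_distrib]

lemma ip_cs (a b : k → ℂ) : ‖ip a b‖ ^ 2 ≤ (ip a a).re * (ip b b).re := by
  have h1 : ∀ x y : k → ℂ, ip x y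
      = inner ℂ ((WithLp.equiv 2 _).symm x : EuclideanSpace ℂ k) ((WithLp.equiv 2 _).symm y) := by
    simp [ip, PiLp.inner_apply, RCLike.inner_apply, mul_comm]
  have h2 : ∀ x : k → ℂ, (ip x x).re = ‖((WithLp.equiv 2 _).symm x : EuclideanSpace ℂ k)‖ ^ 2 := by
    intro x
    rw [h1 x x]
    exact_mod_cast congrArg Complex.re
      (@inner_self_eq_norm_sq_to_K ℂ _ _ _ _ ((WithLp.equiv 2 _).symm x : EuclideanSpace ℂ k))
  rw [h1 a b, h2 a, h2 b]
  calc ‖(inner ℂ ((WithLp.equiv 2 _).symm a : EuclideanSpace ℂ k) ((WithLp.equiv 2 _).symm b) : ℂ)‖ ^ 2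
      ≤ (‖((WithLp.equiv 2 _).symm a : EuclideanSpace ℂ k)‖
          * ‖((WithLp.equiv 2 _).symm b : EuclideanSpace ℂ k)‖) ^ 2 := by
        have := norm_inner_le_norm (𝕜 := ℂ) ((WithLp.equiv 2 _).symm a : EuclideanSpace ℂ k)
          ((WithLp.equiv 2 _).symm b)
        exact pow_le_pow_left₀ (norm_nonneg _) this 2
    _ = _ := by ring

lemma star_mul_self_c (z : ℂ) : star z * z = ((‖z‖ ^ 2 : ℝ) : ℂ) := by
  rw [Complex.star_def, ← Complex.normSq_eq_conj_mul_self, Complex.normSq_eq_norm_sq]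

lemma ip_self_real (x : k → ℂ) : ip x x = ((∑ i, ‖x i‖ ^ 2 : ℝ) : ℂ) := by
  rw [ip, Complex.ofReal_sum]
  exact Finset.sum_congr rfl fun i _ => star_mul_self_c (x i)

end IpLemmas

section PsdLemmas
variable {k : Type*} [Fintype k]

lemma ip_mulVec_factor (A : Matrix k k ℂ) (x y : k → ℂ) :
    ip x ((Aᴴ * A) *ᵥ y) = ip (A *ᵥ x) (A *ᵥ y) := by
  show star x ⬝ᵥ ((Aᴴ * A) *ᵥ y) = star (A *ᵥ x) ⬝ᵥ (A *ᵥ y)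
  rw [dotProduct_mulVec, dotProduct_mulVec, star_mulVec, ← vecMul_vecMul]

open scoped MatrixOrder in
lemma psd_cs {P : Matrix k k ℂ} (hP : P.PosSemidef) (x y : k → ℂ) :
    ‖ip x (P *ᵥ y)‖ ^ 2 ≤ (ip x (P *ᵥ x)).re * (ip y (P *ᵥ y)).re := by
  obtain ⟨A, rfl⟩ : ∃ A : Matrix k k ℂ, P = Aᴴ * A := by
    classical
    obtain ⟨X, hX, -, rfl⟩ := CFC.exists_sqrt_of_isSelfAdjoint_of_quasispectrumRestricts
      hP.isHermitian (QuasispectrumRestricts.nnreal_of_nonneg hP.nonneg)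
    exact ⟨X, by rw [← star_eq_conjTranspose, hX.star_eq]⟩
  rw [ip_mulVec_factor, ip_mulVec_factor, ip_mulVec_factor]
  exact ip_cs _ _

lemma psd_re_nonneg {P : Matrix k k ℂ} (hP : P.PosSemidef) (x : k → ℂ) :
    0 ≤ (ip x (P *ᵥ x)).re :=
  hP.re_dotProduct_nonneg x

lemma ip_outer (w x y : k → ℂ) :
    ip x ((vecMulVec w (star w)) *ᵥ y) = ip x w * ip w y := by
  simp only [ip, mulVec, dotProduct, vecMulVec_apply, Pi.star_apply]
  rw [Finset.sum_mul_sum]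
  refine Finset.sum_congr rfl fun i _ => ?_
  rw [Finset.mul_sum]
  exact Finset.sum_congr rfl fun j _ => by ring

lemma outer_psd (w : k → ℂ) : (vecMulVec w (star w)).PosSemidef := by
  refine Matrix.PosSemidef.of_dotProduct_mulVec_nonneg ?_ ?_
  · ext i j
    simp [conjTranspose_apply, vecMulVec_apply, mul_comm]
  · intro x
    have e : star x ⬝ᵥ (vecMulVec w (star w) *ᵥ x) = ip x w * ip w x := ip_outer w x x
    rw [e, ip_conj w x]
    exact star_mul_self_nonneg _

lemma one_sub_outer_psd [DecidableEq k] (w : k → ℂ) (hw : ip w w = 1) :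
    ((1 : Matrix k k ℂ) - vecMulVec w (star w)).PosSemidef := by
  refine Matrix.PosSemidef.of_dotProduct_mulVec_nonneg ?_ ?_
  · exact Matrix.IsHermitian.sub Matrix.isHermitian_one (outer_psd w).1
  · intro x
    have e : star x ⬝ᵥ (((1 : Matrix k k ℂ) - vecMulVec w (star w)) *ᵥ x)
        = ip x ((((1 : Matrix k k ℂ) - vecMulVec w (star w))) *ᵥ x) := rfl
    rw [e, sub_mulVec, one_mulVec, ip_sub_right, ip_outer, ip_conj w x, star_mul_self_c,
      ip_self_real]
    rw [← Complex.ofReal_sub]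
    rw [Complex.zero_le_real]
    have hcs := ip_cs w x
    rw [hw] at hcs
    simp only [Complex.one_re, one_mul] at hcs
    rw [ip_self_real x] at hcs
    simp only [Complex.ofReal_re] at hcs
    linarith

lemma trace_outer (u v : k → ℂ) :
    (vecMulVec u (star u) * vecMulVec v (star v)).trace = ip u v * ip v u := by
  simp only [Matrix.trace, Matrix.diag_apply, Matrix.mul_apply, vecMulVec_apply, Pi.star_apply, ip]
  rw [Finset.sum_mul_sum, Finset.sum_comm]
  refine Finset.sum_congr rfl fun i _ => Finset.sum_congr rfl fun j _ => by ring

end PsdLemmas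

lemma key_ineq (q0 q1 a b g : ℝ) (hq0 : 0 ≤ q0) (hq1 : 0 ≤ q1) (hq : q0 + q1 = 1)
    (ha : 0 ≤ a) (ha1 : a ≤ 1) (hb : 0 ≤ b) (hb1 : b ≤ 1) (hg : 0 ≤ g)
    (hguv : g ≤ Real.sqrt (a * b) + Real.sqrt ((1 - a) * (1 - b))) :
    q0 * a + q1 * (1 - b) ≤ 1 / 2 + Real.sqrt (1 - 4 * q0 * q1 * g ^ 2) / 2 := by
  set x1 := Real.sqrt a with hx1
  set x2 := Real.sqrt (1 - a) with hx2
  set y1 := Real.sqrt b with hy1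
  set y2 := Real.sqrt (1 - b) with hy2
  have hx1s : x1 ^ 2 = a := Real.sq_sqrt ha
  have hx2s : x2 ^ 2 = 1 - a := Real.sq_sqrt (by linarith)
  have hy1s : y1 ^ 2 = b := Real.sq_sqrt hb
  have hy2s : y2 ^ 2 = 1 - b := Real.sq_sqrt (by linarith)
  have hg' : g ≤ x1 * y1 + x2 * y2 := by
    rw [Real.sqrt_mul ha, Real.sqrt_mul (by linarith : (0:ℝ) ≤ 1 - a)] at hguv
    exact hguv
  set t := q0 * a + q1 * (1 - b) - 1 / 2 with ht
  set P := x1 * x2 * y1 * y2 with hP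
  clear_value t P
  have e1 : (x1 * y1 + x2 * y2) ^ 2 = a * b + (1 - a) * (1 - b) + 2 * P := by
    have : (x1 * y1 + x2 * y2) ^ 2 = x1 ^ 2 * y1 ^ 2 + x2 ^ 2 * y2 ^ 2 + 2 * P := by
      rw [hP]; ring
    rw [hx1s, hx2s, hy1s, hy2s] at this; exact this
  have e2 : (q0 * (x1 * x2) - q1 * (y1 * y2)) ^ 2
      = q0 ^ 2 * (a * (1 - a)) + q1 ^ 2 * (b * (1 - b)) - 2 * q0 * q1 * P := by
    have : (q0 * (x1 * x2) - q1 * (y1 * y2)) ^ 2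
        = q0 ^ 2 * (x1 ^ 2 * x2 ^ 2) + q1 ^ 2 * (y1 ^ 2 * y2 ^ 2) - 2 * q0 * q1 * P := by
      rw [hP]; ring
    rw [hx1s, hx2s, hy1s, hy2s] at this; exact this
  have hq1' : q1 = 1 - q0 := by linarith
  have e3 : 1 - 4 * q0 * q1 * (a * b + (1 - a) * (1 - b)) - 4 * t ^ 2
      - 4 * (q0 ^ 2 * (a * (1 - a)) + q1 ^ 2 * (b * (1 - b))) = 0 := by
    rw [ht, hq1']; ring
  have e4 : 1 - 4 * q0 * q1 * (x1 * y1 + x2 * y2) ^ 2 - 4 * t ^ 2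
      = 4 * (q0 * (x1 * x2) - q1 * (y1 * y2)) ^ 2 := by
    rw [e1, e2]; linarith [e3]
  have hgsq : g ^ 2 ≤ (x1 * y1 + x2 * y2) ^ 2 := by
    have h0 : 0 ≤ x1 * y1 + x2 * y2 := le_trans hg hg'
    nlinarith
  have hkey : 4 * t ^ 2 ≤ 1 - 4 * q0 * q1 * g ^ 2 := by
    have hmul : 4 * q0 * q1 * g ^ 2 ≤ 4 * q0 * q1 * (x1 * y1 + x2 * y2) ^ 2 := by
      have h4 : (0:ℝ) ≤ 4 * q0 * q1 := by positivity
      exact mul_le_mul_of_nonneg_left hgsq h4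
    linarith [sq_nonneg (q0 * (x1 * x2) - q1 * (y1 * y2)), e4]
  rcases le_or_gt t 0 with h | h
  · have := Real.sqrt_nonneg (1 - 4 * q0 * q1 * g ^ 2); rw [ht] at h; linarith
  · have h4 : (2 * t) ^ 2 ≤ 1 - 4 * q0 * q1 * g ^ 2 := by nlinarith
    have h5 : 2 * t ≤ Real.sqrt (1 - 4 * q0 * q1 * g ^ 2) := by
      calc 2 * t = Real.sqrt ((2 * t) ^ 2) := (Real.sqrt_sq (by linarith)).symm
        _ ≤ _ := Real.sqrt_le_sqrt h4
    linarith


lemma povm_le {m : ℕ} (d : Fin 2 → Fin m → ℂ) (hd : ∀ i, ip (d i) (d i) = 1)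
    (q : Fin 2 → ℝ) (hq0 : 0 ≤ q 0) (hq1 : 0 ≤ q 1) (hsum : q 0 + q 1 = 1)
    (Pov : Fin 2 → Matrix (Fin m) (Fin m) ℂ) (hPsd : ∀ i, (Pov i).PosSemidef)
    (hs : (∑ i, Pov i) = 1) :
    ∑ i, q i * (ip (d i) ((Pov i) *ᵥ (d i))).re ≤
      1 / 2 + Real.sqrt (1 - 4 * q 0 * q 1 * ‖ip (d 0) (d 1)‖ ^ 2) / 2 := by
  rw [Fin.sum_univ_two] at hs ⊢
  have hs' : Pov 1 = 1 - Pov 0 := by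
    rw [← hs]; abel
  have hpsd0 := hPsd 0
  have hpsd1 : ((1 : Matrix (Fin m) (Fin m) ℂ) - Pov 0).PosSemidef := hs' ▸ hPsd 1
  set a := (ip (d 0) ((Pov 0) *ᵥ (d 0))).re with ha
  set b := (ip (d 1) ((Pov 0) *ᵥ (d 1))).re with hb
  have hsub2 : ∀ x y : Fin m → ℂ,
      ip x (((1 : Matrix (Fin m) (Fin m) ℂ) - Pov 0) *ᵥ y) = ip x y - ip x ((Pov 0) *ᵥ y) := by
    intro x y; rw [sub_mulVec, one_mulVec, ip_sub_right]
  have ha0 : 0 ≤ a := psd_re_nonneg hpsd0 _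
  have hb0 : 0 ≤ b := psd_re_nonneg hpsd0 _
  have e0 : (ip (d 0) (((1 : Matrix (Fin m) (Fin m) ℂ) - Pov 0) *ᵥ (d 0))).re = 1 - a := by
    rw [hsub2, Complex.sub_re, hd 0, Complex.one_re, ha]
  have e1 : (ip (d 1) (((1 : Matrix (Fin m) (Fin m) ℂ) - Pov 0) *ᵥ (d 1))).re = 1 - b := by
    rw [hsub2, Complex.sub_re, hd 1, Complex.one_re, hb]
  have ha1 : a ≤ 1 := by
    have := psd_re_nonneg hpsd1 (d 0); rw [e0] at this; linarith
  have hb1 : b ≤ 1 := by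
    have := psd_re_nonneg hpsd1 (d 1); rw [e1] at this; linarith
  have h1 : ‖ip (d 0) ((Pov 0) *ᵥ d 1)‖ ≤ Real.sqrt (a * b) := by
    have hcs := psd_cs hpsd0 (d 0) (d 1)
    calc ‖ip (d 0) ((Pov 0) *ᵥ d 1)‖ = Real.sqrt (‖ip (d 0) ((Pov 0) *ᵥ d 1)‖ ^ 2) :=
          (Real.sqrt_sq (norm_nonneg _)).symm
      _ ≤ Real.sqrt (a * b) := Real.sqrt_le_sqrt hcs
  have h2 : ‖ip (d 0) (((1 : Matrix (Fin m) (Fin m) ℂ) - Pov 0) *ᵥ d 1)‖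
      ≤ Real.sqrt ((1 - a) * (1 - b)) := by
    have hcs := psd_cs hpsd1 (d 0) (d 1)
    rw [e0, e1] at hcs
    calc ‖ip (d 0) (((1 : Matrix (Fin m) (Fin m) ℂ) - Pov 0) *ᵥ d 1)‖
        = Real.sqrt (‖ip (d 0) (((1 : Matrix (Fin m) (Fin m) ℂ) - Pov 0) *ᵥ d 1)‖ ^ 2) :=
          (Real.sqrt_sq (norm_nonneg _)).symm
      _ ≤ Real.sqrt ((1 - a) * (1 - b)) := Real.sqrt_le_sqrt hcs
  have hdec : ip (d 0) (d 1)
      = ip (d 0) ((Pov 0) *ᵥ d 1) + ip (d 0) (((1 : Matrix (Fin m) (Fin m) ℂ) - Pov 0) *ᵥ d 1) := by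
    rw [hsub2]; ring
  have hg : ‖ip (d 0) (d 1)‖ ≤ Real.sqrt (a * b) + Real.sqrt ((1 - a) * (1 - b)) := by
    calc ‖ip (d 0) (d 1)‖ ≤ ‖ip (d 0) ((Pov 0) *ᵥ d 1)‖
          + ‖ip (d 0) (((1 : Matrix (Fin m) (Fin m) ℂ) - Pov 0) *ᵥ d 1)‖ := by
            rw [hdec]; exact norm_add_le _ _
      _ ≤ _ := add_le_add h1 h2
  have hv1 : (ip (d 1) ((Pov 1) *ᵥ d 1)).re = 1 - b := by rw [hs']; exact e1
  rw [hv1]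
  exact key_ineq (q 0) (q 1) a b ‖ip (d 0) (d 1)‖ hq0 hq1 hsum ha0 ha1 hb0 hb1 (norm_nonneg _) hg


lemma povm_exists {m : ℕ} (d : Fin 2 → Fin m → ℂ) (hd : ∀ i, ip (d i) (d i) = 1)
    (q : Fin 2 → ℝ) (hq0 : 0 ≤ q 0) (hq1 : 0 ≤ q 1) (hsum : q 0 + q 1 = 1) :
    ∃ Pov : Fin 2 → Matrix (Fin m) (Fin m) ℂ,
      (∀ i, (Pov i).PosSemidef) ∧ (∑ i, Pov i) = 1 ∧
      ∑ i, q i * (ip (d i) ((Pov i) *ᵥ (d i))).re =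
        1 / 2 + Real.sqrt (1 - 4 * q 0 * q 1 * ‖ip (d 0) (d 1)‖ ^ 2) / 2 := by
  set γ := ip (d 0) (d 1) with hγ
  set g := ‖γ‖ with hgdef
  have hg0 : 0 ≤ g := norm_nonneg _
  have hg1 : g ≤ 1 := by
    have := ip_cs (d 0) (d 1)
    rw [hd 0, hd 1] at this
    simp only [Complex.one_re, one_mul] at this
    nlinarith
  have hargn : 0 ≤ 1 - 4 * q 0 * q 1 * g ^ 2 := by
    have h4 : 4 * q 0 * q 1 ≤ 1 := by nlinarith [sq_nonneg (q 0 - q 1)]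
    have hgsq : g ^ 2 ≤ 1 := by nlinarith
    nlinarith [mul_nonneg (mul_nonneg hq0 hq1) (sq_nonneg g)]
  set s := Real.sqrt (1 - 4 * q 0 * q 1 * g ^ 2) with hsdef
  have hs2 : s ^ 2 = 1 - 4 * q 0 * q 1 * g ^ 2 := Real.sq_sqrt hargn
  have hs0 : 0 ≤ s := Real.sqrt_nonneg _
  by_cases hgc : g = 1
  · -- degenerate case : |⟨d0, d1⟩| = 1
    have hs2' : s ^ 2 = (q 0 - q 1) ^ 2 := by
      rw [hs2, hgc]; linear_combination (-(1 + q 0 + q 1)) * hsum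
    rcases le_total (q 1) (q 0) with hc | hc
    · refine ⟨![1, 0], ?_, ?_, ?_⟩
      · intro i; fin_cases i
        · simpa using (Matrix.PosSemidef.one : (1 : Matrix (Fin m) (Fin m) ℂ).PosSemidef)
        · simpa using (Matrix.PosSemidef.zero : (0 : Matrix (Fin m) (Fin m) ℂ).PosSemidef)
      · rw [Fin.sum_univ_two]; simp
      · rw [Fin.sum_univ_two]
        have hval : s = q 0 - q 1 := by
          have : s = |q 0 - q 1| := by
            rw [← Real.sqrt_sq_eq_abs, ← hs2', Real.sqrt_sq hs0]
          rw [abs_of_nonneg (by linarith)] at this; exact this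
        simp only [Matrix.cons_val_zero, Matrix.cons_val_one, Matrix.head_cons,
          one_mulVec, zero_mulVec]
        rw [hd 0]
        have hz : ip (d 1) (0 : Fin m → ℂ) = 0 := by simp [ip]
        rw [hz]
        simp only [Complex.one_re, Complex.zero_re, mul_one, mul_zero, add_zero]
        rw [hval]; linarith
    · refine ⟨![0, 1], ?_, ?_, ?_⟩
      · intro i; fin_cases i
        · simpa using (Matrix.PosSemidef.zero : (0 : Matrix (Fin m) (Fin m) ℂ).PosSemidef)
        · simpa using (Matrix.PosSemidef.one : (1 : Matrix (Fin m) (Fin m) ℂ).PosSemidef)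
      · rw [Fin.sum_univ_two]; simp
      · rw [Fin.sum_univ_two]
        have hval : s = q 1 - q 0 := by
          have : s = |q 0 - q 1| := by
            rw [← Real.sqrt_sq_eq_abs, ← hs2', Real.sqrt_sq hs0]
          rw [abs_of_nonpos (by linarith)] at this; linarith
        simp only [Matrix.cons_val_zero, Matrix.cons_val_one, Matrix.head_cons,
          one_mulVec, zero_mulVec]
        rw [hd 1]
        have hz : ip (d 0) (0 : Fin m → ℂ) = 0 := by simp [ip]
        rw [hz]
        simp only [Complex.one_re, Complex.zero_re, mul_one, mul_zero, zero_add]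
        rw [hval]; linarith
  · -- main case : g < 1
    have hglt : g < 1 := lt_of_le_of_ne hg1 hgc
    obtain ⟨h, hh2, hhpos⟩ : ∃ h : ℝ, h ^ 2 = 1 - g ^ 2 ∧ 0 < h :=
      ⟨Real.sqrt (1 - g ^ 2), Real.sq_sqrt (by nlinarith), Real.sqrt_pos.mpr (by nlinarith)⟩
    set l := (q 0 - q 1 + s) / 2 with hl
    clear_value l
    have habs : |q 0 - q 1| ≤ s := by
      have hqg : 0 ≤ q 0 * q 1 * (1 - g ^ 2) :=
        mul_nonneg (mul_nonneg hq0 hq1) (by nlinarith)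
      have h4 : (q 0 - q 1) ^ 2 ≤ s ^ 2 := by rw [hs2]; nlinarith
      rw [← Real.sqrt_sq_eq_abs, ← Real.sqrt_sq hs0]
      exact Real.sqrt_le_sqrt h4
    have hsge : q 1 - q 0 ≤ s := by
      have := abs_le.mp habs; linarith [this.1]
    have hl0 : 0 ≤ l := by rw [hl]; linarith
    set c1 := q 1 * h ^ 2 + l with hc1def
    set c2 := -(q 1 * g * h) with hc2def
    clear_value c1 c2
    have hc1 : 0 < c1 := by
      rcases eq_or_lt_of_le hq1 with he | hlt
      · have hq0' : q 0 = 1 := by linarith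
        have hsval : s = 1 := by
          rw [hsdef, ← he, hq0']; norm_num
        rw [hc1def, ← he, hl, ← he, hq0', hsval]; norm_num
      · have h5 : 0 < q 1 * h ^ 2 := by positivity
        rw [hc1def]; linarith
    set N := c1 ^ 2 + c2 ^ 2 with hNdef
    clear_value N
    have hN : 0 < N := by rw [hNdef]; positivity
    have hNs : Real.sqrt N ^ 2 = N := Real.sq_sqrt (le_of_lt hN)
    have hNsp : 0 < Real.sqrt N := Real.sqrt_pos.mpr hN
    set u := c1 / Real.sqrt N with hu
    set v := c2 / Real.sqrt N with hv
    clear_value u v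
    have huv : u ^ 2 + v ^ 2 = 1 := by
      rw [hu, hv, div_pow, div_pow, hNs, hNdef, ← add_div, div_self (by rw [← hNdef]; exact ne_of_gt hN)]
    -- the phase
    set φ : ℂ := if γ = 0 then 1 else γ / (g : ℝ) with hφdef
    clear_value φ
    have hgne' : γ ≠ 0 → g ≠ 0 := fun hz hh => hz (norm_eq_zero.mp (by rw [← hgdef]; exact hh))
    have hφγ : γ = φ * (g : ℝ) := by
      by_cases hz : γ = 0
      · rw [hφdef, if_pos hz, hz]
        have hg0' : g = 0 := by rw [hgdef, hz, norm_zero]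
        rw [hg0']; simp
      · rw [hφdef, if_neg hz]
        have hgne : (g : ℂ) ≠ 0 := by
          simp only [ne_eq, Complex.ofReal_eq_zero]
          exact hgne' hz
        field_simp
    have hφn : ‖φ‖ = 1 := by
      by_cases hz : γ = 0
      · rw [hφdef, if_pos hz]; simp
      · have hng : ‖((g : ℝ) : ℂ)‖ = g := by
          rw [Complex.norm_real, Real.norm_eq_abs, abs_of_nonneg hg0]
        rw [hφdef, if_neg hz, norm_div, hng, ← hgdef]
        exact div_self (hgne' hz)
    have hφ1 : star φ * φ = 1 := by
      rw [star_mul_self_c, hφn]; norm_num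
    have hφ1' : φ * star φ = 1 := by rw [mul_comm]; exact hφ1
    have hsg : star ((g : ℝ) : ℂ) = ((g : ℝ) : ℂ) := Complex.conj_ofReal g
    have hsh : star ((h : ℝ) : ℂ) = ((h : ℝ) : ℂ) := Complex.conj_ofReal h
    -- vectors
    set D2 : Fin m → ℂ := star φ • d 1 with hD2
    clear_value D2
    have h0D : ip (d 0) D2 = ((g : ℝ) : ℂ) := by
      rw [hD2, ip_smul_right, ← hγ, hφγ, ← mul_assoc, hφ1, one_mul]
    have hD0 : ip D2 (d 0) = ((g : ℝ) : ℂ) := by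
      rw [ip_conj, h0D, Complex.star_def, Complex.conj_ofReal]
    have hDD : ip D2 D2 = 1 := by
      rw [hD2]
      simp only [ip_smul_left, ip_smul_right]
      rw [hd 1, mul_one, star_star, hφ1]
    have hd1D : d 1 = φ • D2 := by
      rw [hD2, smul_smul, hφ1', one_smul]
    set e2 : Fin m → ℂ := ((h : ℝ) : ℂ)⁻¹ • (D2 - ((g : ℝ) : ℂ) • d 0) with he2
    clear_value e2
    have hhne : ((h : ℝ) : ℂ) ≠ 0 := by
      simp only [ne_eq, Complex.ofReal_eq_zero]; exact ne_of_gt hhpos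
    have h0e2 : ip (d 0) e2 = 0 := by
      rw [he2]
      simp only [ip_smul_right, ip_sub_right]
      rw [h0D, hd 0, mul_one, sub_self, mul_zero]
    have he20 : ip e2 (d 0) = 0 := by
      rw [ip_conj, h0e2, star_zero]
    have hcast2 : ((h : ℝ) : ℂ) * ((h : ℝ) : ℂ) = 1 - ((g : ℝ) : ℂ) * ((g : ℝ) : ℂ) := by
      have hc := congrArg (Complex.ofReal) hh2
      push_cast at hc
      linear_combination hc
    have he2e2 : ip e2 e2 = 1 := by
      rw [he2]
      simp only [ip_smul_left, ip_smul_right, ip_sub_left, ip_sub_right]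
      rw [hDD, hD0, h0D, hd 0, hsg, star_inv₀, hsh]
      field_simp
      linear_combination -hcast2
    have he2d1 : ip e2 (d 1) = φ * ((h : ℝ) : ℂ) := by
      rw [hd1D, ip_smul_right]
      congr 1
      rw [he2]
      simp only [ip_smul_left, ip_sub_left, ip_smul_left]
      rw [hDD, h0D, hsg, star_inv₀, hsh]
      field_simp
      linear_combination -hcast2
    -- the optimal vector and projector
    set w : Fin m → ℂ := ((u : ℝ) : ℂ) • d 0 + ((v : ℝ) : ℂ) • e2 with hw
    clear_value w
    have hsu : star ((u : ℝ) : ℂ) = ((u : ℝ) : ℂ) := Complex.conj_ofReal u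
    have hsv : star ((v : ℝ) : ℂ) = ((v : ℝ) : ℂ) := Complex.conj_ofReal v
    have hwd0 : ip w (d 0) = ((u : ℝ) : ℂ) := by
      rw [hw]
      simp only [ip_add_left, ip_smul_left]
      rw [hd 0, he20, hsu, hsv]
      ring
    have hww : ip w w = 1 := by
      rw [hw]
      simp only [ip_add_left, ip_add_right, ip_smul_left, ip_smul_right]
      rw [hd 0, he2e2, h0e2, he20, hsu, hsv]
      have hc := congrArg (Complex.ofReal) huv
      push_cast at hc
      linear_combination hc
    have hwd1 : ip w (d 1) = φ * ((u * g + v * h : ℝ) : ℂ) := by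
      rw [hw]
      simp only [ip_add_left, ip_smul_left]
      rw [← hγ, he2d1, hsu, hsv, hφγ]
      push_cast; ring
    set Pr : Matrix (Fin m) (Fin m) ℂ := vecMulVec w (star w) with hPr
    clear_value Pr
    refine ⟨![Pr, 1 - Pr], ?_, ?_, ?_⟩
    · intro i; fin_cases i
      · simpa using hPr ▸ outer_psd w
      · simpa using hPr ▸ one_sub_outer_psd w hww
    · rw [Fin.sum_univ_two]
      simp
    · rw [Fin.sum_univ_two]
      simp only [Matrix.cons_val_zero, Matrix.cons_val_one, Matrix.head_cons]
      have hterm0 : (ip (d 0) (Pr *ᵥ d 0)).re = u ^ 2 := by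
        rw [hPr, ip_outer, ip_conj w (d 0), hwd0, hsu]
        rw [show ((u:ℝ):ℂ) * ((u:ℝ):ℂ) = ((u ^ 2 : ℝ) : ℂ) by push_cast; ring]
        rw [Complex.ofReal_re]
      have hterm1 : (ip (d 1) ((1 - Pr) *ᵥ d 1)).re = 1 - (u * g + v * h) ^ 2 := by
        rw [sub_mulVec, one_mulVec, ip_sub_right, hPr, ip_outer, ip_conj w (d 1), hwd1]
        rw [hd 1]
        have hx : star (φ * ((u * g + v * h : ℝ) : ℂ)) * (φ * ((u * g + v * h : ℝ) : ℂ))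
            = (((u * g + v * h) ^ 2 : ℝ) : ℂ) := by
          rw [star_mul_self_c, norm_mul, hφn, one_mul, Complex.norm_real,
            Real.norm_eq_abs, sq_abs]
        rw [hx]
        rw [show (1 : ℂ) - (((u * g + v * h) ^ 2 : ℝ) : ℂ)
            = ((1 - (u * g + v * h) ^ 2 : ℝ) : ℂ) by push_cast; ring]
        rw [Complex.ofReal_re]
      rw [hterm0, hterm1]
      -- final algebra
      have hlam : l ^ 2 = (q 0 - q 1) * l + q 0 * q 1 * h ^ 2 := by
        rw [hl]
        linear_combination hs2 / 4 - (q 0 * q 1) * hh2 - ((1 + q 0 + q 1) / 4) * hsum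
      have hgh : g ^ 2 + h ^ 2 = 1 := by linarith
      have hmain : q 0 * c1 ^ 2 - q 1 * (g * l) ^ 2 = l * N := by
        rw [hNdef, hc1def, hc2def]
        linear_combination (q 0 - 2 * q 1 * h ^ 2 - q 1 * g ^ 2 - l - (q 0 - q 1)) * hlam
          + (-(q 0 * q 1 ^ 2 * h ^ 2) - q 1 ^ 2 * h ^ 2 * l - (q 0 - q 1) * q 1 * l) * hgh
      have hgl : c1 * g + c2 * h = g * l := by
        rw [hc1def, hc2def]; ring
      have hu2 : u ^ 2 = c1 ^ 2 / N := by rw [hu, div_pow, hNs]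
      have huvgh : (u * g + v * h) ^ 2 = (g * l) ^ 2 / N := by
        rw [hu, hv]
        rw [div_mul_eq_mul_div, div_mul_eq_mul_div, ← add_div, div_pow, hNs, hgl]
      rw [hu2, huvgh]
      have hfin : q 0 * (c1 ^ 2 / N) + q 1 * (1 - (g * l) ^ 2 / N) = q 1 + l := by
        field_simp
        linear_combination hmain
      rw [hfin, hl]
      linarith

lemma Ps_eq {m : ℕ} (d : Fin 2 → Fin m → ℂ) (hd : ∀ i, ip (d i) (d i) = 1)
    (q : Fin 2 → ℝ) (hq0 : 0 ≤ q 0) (hq1 : 0 ≤ q 1) (hsum : q 0 + q 1 = 1) :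
    Ps d q = 1 / 2 + Real.sqrt (1 - 4 * q 0 * q 1 * ‖ip (d 0) (d 1)‖ ^ 2) / 2 := by
  obtain ⟨Pov, h1, h2, h3⟩ := povm_exists d hd q hq0 hq1 hsum
  set T := 1 / 2 + Real.sqrt (1 - 4 * q 0 * q 1 * ‖ip (d 0) (d 1)‖ ^ 2) / 2 with hT
  have hmem : T ∈ { x : ℝ | ∃ Pov : Fin 2 → Matrix (Fin m) (Fin m) ℂ,
      (∀ i, (Pov i).PosSemidef) ∧ (∑ i, Pov i) = 1 ∧
      x = ∑ i, q i * (ip (d i) ((Pov i) *ᵥ (d i))).re } := ⟨Pov, h1, h2, h3.symm⟩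
  have hub : ∀ x ∈ { x : ℝ | ∃ Pov : Fin 2 → Matrix (Fin m) (Fin m) ℂ,
      (∀ i, (Pov i).PosSemidef) ∧ (∑ i, Pov i) = 1 ∧
      x = ∑ i, q i * (ip (d i) ((Pov i) *ᵥ (d i))).re }, x ≤ T := by
    rintro x ⟨P, hP1, hP2, rfl⟩
    exact povm_le d hd q hq0 hq1 hsum P hP1 hP2
  exact le_antisymm (csSup_le ⟨T, hmem⟩ hub) (le_csSup ⟨T, hub⟩ hmem)


/-- for the two-path interferometer with detector and quantum memory, the
duality between path distinguishability and visibility is complete (an identity). -/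
theorem stmt1 (m : ℕ) (d : Fin 2 → Fin m → ℂ)
    (hd : ∀ i, ip (d i) (d i) = 1)
    (ρA : Matrix (Fin 2) (Fin 2) ℂ) (hpsd : ρA.PosSemidef) (htr : ρA.trace = 1)
    (q : Fin 2 → ℝ) (hq : ∀ i, (q i : ℂ) = ρA i i) :
    (Ps d q - 1 / 2) ^ 2 + (Vis d ρA) ^ 2 =
      1 / 4 - (1 / 2) * (purity (detState d q) - purity (post d ρA)) := by
  -- basic facts
  have hdiag : ∀ i, q i = (ρA i i).re := fun i => by
    rw [← hq i, Complex.ofReal_re]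
  have hqnn : ∀ i, 0 ≤ q i := by
    intro i
    have h2 := hpsd.dotProduct_mulVec_nonneg (Pi.single i 1)
    have e : star (Pi.single i 1 : Fin 2 → ℂ) ⬝ᵥ (ρA *ᵥ Pi.single i 1) = ρA i i := by
      simp [dotProduct, mulVec, Pi.single_apply, Fin.sum_univ_two]
    rw [e] at h2
    rw [hdiag i]
    exact (Complex.le_def.mp h2).1
  have hsum : q 0 + q 1 = 1 := by
    have : ((q 0 + q 1 : ℝ) : ℂ) = 1 := by
      push_cast
      rw [hq 0, hq 1, ← htr]
      rw [Matrix.trace, Fin.sum_univ_two]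
      rfl
    exact_mod_cast this
  set g := ‖ip (d 0) (d 1)‖ with hgdef
  set r := ‖ρA 0 1‖ with hrdef
  have hg0 : 0 ≤ g := norm_nonneg _
  have hg1 : g ≤ 1 := by
    have := ip_cs (d 0) (d 1)
    rw [hd 0, hd 1] at this
    simp only [Complex.one_re, one_mul] at this
    nlinarith
  have h10 : ρA 1 0 = star (ρA 0 1) := (hpsd.1.apply 1 0).symm
  have hcg : ip (d 1) (d 0) = star (ip (d 0) (d 1)) := ip_conj (d 0) (d 1)
  -- Ps
  have hargn : 0 ≤ 1 - 4 * q 0 * q 1 * g ^ 2 := by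
    have h4 : 4 * q 0 * q 1 ≤ 1 := by nlinarith [sq_nonneg (q 0 - q 1)]
    nlinarith [mul_nonneg (mul_nonneg (hqnn 0) (hqnn 1)) (sq_nonneg g)]
  have hPs : (Ps d q - 1 / 2) ^ 2 = (1 - 4 * q 0 * q 1 * g ^ 2) / 4 := by
    rw [Ps_eq d hd q (hqnn 0) (hqnn 1) hsum, ← hgdef]
    rw [show 1 / 2 + Real.sqrt (1 - 4 * q 0 * q 1 * g ^ 2) / 2 - 1 / 2
        = Real.sqrt (1 - 4 * q 0 * q 1 * g ^ 2) / 2 by ring]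
    rw [div_pow, Real.sq_sqrt hargn]
    norm_num
  -- Vis
  have hVis : (Vis d ρA) ^ 2 = g ^ 2 * r ^ 2 := by
    rw [Vis]
    rw [Real.sq_sqrt]
    · rw [Fin.sum_univ_two, Fin.sum_univ_two]
      have h1 : ‖ip (d 1) (d 0)‖ = g := by
        rw [hcg, norm_star]
      have h2 : ‖ρA 1 0‖ = r := by
        rw [h10, norm_star]
      have h3 : ‖ip (d 0) (d 1)‖ = g := by
        rfl
      have h4 : ‖ρA 0 1‖ = r := by
        rfl
      norm_num
      rw [h1, h2, h3, h4]
      ring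
    · apply mul_nonneg
      · norm_num
      · apply Finset.sum_nonneg
        intro i _
        apply Finset.sum_nonneg
        intro k _
        by_cases hik : i = k
        · simp [hik]
        · simp only [hik, if_false]
          positivity
  -- purity detState
  have houter : ∀ i j : Fin 2,
      (vecMulVec (d i) (star (d i)) * vecMulVec (d j) (star (d j))).trace
      = ip (d i) (d j) * ip (d j) (d i) := fun i j => trace_outer (d i) (d j)
  have hcross : ip (d 0) (d 1) * ip (d 1) (d 0) = ((g ^ 2 : ℝ) : ℂ) := by
    rw [hcg, Complex.star_def, Complex.mul_conj, Complex.normSq_eq_norm_sq,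
      ← hgdef]
  have hpD : purity (detState d q) = q 0 ^ 2 + q 1 ^ 2 + 2 * (q 0 * q 1) * g ^ 2 := by
    have e : (detState d q * detState d q).trace
        = ((q 0 ^ 2 + q 1 ^ 2 + 2 * (q 0 * q 1) * g ^ 2 : ℝ) : ℂ) := by
      rw [detState, Fin.sum_univ_two, Matrix.add_mul, Matrix.mul_add, Matrix.mul_add]
      simp only [Matrix.trace_add, Matrix.smul_mul, Matrix.mul_smul, Matrix.trace_smul]
      rw [houter 0 0, houter 0 1, houter 1 0, houter 1 1, hd 0, hd 1]
      rw [hcross, show ip (d 1) (d 0) * ip (d 0) (d 1) = ((g ^ 2 : ℝ) : ℂ) by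
        rw [mul_comm]; exact hcross]
      push_cast
      simp only [smul_eq_mul]
      ring
    rw [purity, e, Complex.ofReal_re]
  -- purity post
  have hszz : star (ip (d 0) (d 1)) * ip (d 0) (d 1) = ((g ^ 2 : ℝ) : ℂ) := by
    rw [star_mul_self_c, hgdef]
  have hsrr : star (ρA 0 1) * ρA 0 1 = ((r ^ 2 : ℝ) : ℂ) := by
    rw [star_mul_self_c, hrdef]
  push_cast at hszz hsrr
  have hpost : purity (post d ρA) = q 0 ^ 2 + q 1 ^ 2 + 2 * (g ^ 2 * r ^ 2) := by
    have e : (post d ρA * post d ρA).trace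
        = ((q 0 ^ 2 + q 1 ^ 2 + 2 * (g ^ 2 * r ^ 2) : ℝ) : ℂ) := by
      rw [Matrix.trace, Fin.sum_univ_two]
      simp only [Matrix.diag_apply, Matrix.mul_apply, Fin.sum_univ_two, post, Matrix.of_apply]
      rw [hd 0, hd 1, ← hq 0, ← hq 1, h10, hcg]
      push_cast
      linear_combination (2 * ρA 0 1 * star (ρA 0 1)) * hszz + (2 * (((g : ℝ) : ℂ)) ^ 2) * hsrr
    rw [purity, e, Complex.ofReal_re]
  rw [hPs, hVis, hpD, hpost]
  ring
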